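/- Let 0 < C < ∞ and let π ∈ 𝔄_C. Then for every nonnegative f ∈ C([0,1]) and every t ∈ [0,T₀], π_t(f) ≤ (max_{0≤x≤1} f(x)) · (2C + (e−1)∫₀¹ φ(x) dx). In particular π_t(𝟙) ≤ π₀(𝟙) + C and π₀(𝟙) ≤ C + (e−1)∫₀¹ φ(x) dx, where 𝟙 is the constant function 1. -/

import Mathlib

open MeasureTheory

noncomputable section

/-- The unit interval `[0,1]`. -/
abbrev I01 := unitInterval

/-- The Banach space `C([0,1])` of continuous real functions with the sup norm. -/
abbrev CI := C(I01, ℝ)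

/-- The topological dual `𝒮` of `C([0,1])` with the operator norm. -/
abbrev S := CI →L[ℝ] ℝ

/-- A real function on `[0,T₀]` is càdlàg: right-continuous on `[0,T₀]`
with left limits on `(0,T₀]`. -/
def Cadlag (T₀ : ℝ) (g : ℝ → ℝ) : Prop :=
  (∀ t ∈ Set.Icc (0:ℝ) T₀, Filter.Tendsto g (nhdsWithin t (Set.Ici t)) (nhds (g t))) ∧
  (∀ t ∈ Set.Ioc (0:ℝ) T₀, ∃ L : ℝ, Filter.Tendsto g (nhdsWithin t (Set.Iio t)) (nhds L))

/-- The initial large-deviation rate functional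
`J_ini(ν) = sup_f { ν(f) - ∫₀¹ φ(x)(e^{f(x)} - 1) dx }`. -/
def Jini (φ : CI) (ν : S) : EReal :=
  ⨆ f : CI, ((ν f - ∫ x : I01, φ x * (Real.exp (f x) - 1) : ℝ) : EReal)

/-- Test functions in `C^{1,0}([0,T₀]×[0,1])`, encoded as a pair: a curve `G : [0,T₀] → C([0,1])`
together with its continuous time-derivative `∂ₜG`. -/
def C10 (T₀ : ℝ) : Set ((ℝ → CI) × (ℝ → CI)) :=
  {p | ContinuousOn p.1 (Set.Icc 0 T₀) ∧ ContinuousOn p.2 (Set.Icc 0 T₀) ∧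
    ∀ t ∈ Set.Icc (0:ℝ) T₀, HasDerivWithinAt p.1 (p.2 t) (Set.Icc 0 T₀) t}

/-- The dynamical large-deviation rate functional
`J_dyn(π) = sup_G { π_{T₀}(G_{T₀}) - π₀(G₀) - ∫₀^{T₀} π_s((∂ₛG)_s + 𝓑G_s) ds }`. -/
def Jdyn (T₀ : ℝ) (B : CI → CI) (π : ℝ → S) : EReal :=
  ⨆ G ∈ C10 T₀,
    ((π T₀ (G.1 T₀) - π 0 (G.1 0)
      - ∫ s in (0:ℝ)..T₀, π s (G.2 s + B (G.1 s)) : ℝ) : EReal)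

/-- The set `𝔄_C`: càdlàg nonnegative paths `π : [0,T₀] → 𝒮` with
`J_ini(π₀) + J_dyn(π) ≤ C`. -/
def memA (T₀ C : ℝ) (φ : CI) (B : CI → CI) (π : ℝ → S) : Prop :=
  (∀ f : CI, Cadlag T₀ fun t => π t f) ∧
  (∀ t ∈ Set.Icc (0:ℝ) T₀, ∀ f : CI, (∀ x, 0 ≤ f x) → 0 ≤ π t f) ∧
  Jini φ (π 0) + Jdyn T₀ B π ≤ (C : EReal)

/-- Uniform boundedness on `𝔄_C`: for nonnegative `f`,
`π_t(f) ≤ (max f)(2C + (e-1)∫₀¹φ)`; in particular `π_t(𝟙) ≤ π₀(𝟙) + C` and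
`π₀(𝟙) ≤ C + (e-1)∫₀¹φ`. -/
theorem uniform_bound_on_A
    (lam : C(I01 × I01, ℝ)) (hlam : ∀ p, 0 < lam p)
    (φ : CI) (hφ : ∀ x, 0 < φ x)
    (T₀ : ℝ) (hT₀ : 0 < T₀)
    (B : CI → CI)
    (hB : ∀ (f : CI) (x : I01), B f x = ∫ y : I01, lam (x, y) * (Real.exp (f y - f x) - 1))
    (C : ℝ) (hC : 0 < C)
    (π : ℝ → S) (hA : memA T₀ C φ B π) :
    (∀ f : CI, (∀ x, 0 ≤ f x) → ∀ t ∈ Set.Icc (0:ℝ) T₀,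
      π t f ≤ (⨆ x : I01, f x) * (2 * C + (Real.exp 1 - 1) * ∫ x : I01, φ x)) ∧
    (∀ t ∈ Set.Icc (0:ℝ) T₀, π t (1 : CI) ≤ π 0 (1 : CI) + C) ∧
    π 0 (1 : CI) ≤ C + (Real.exp 1 - 1) * ∫ x : I01, φ x := by
  
  obtain ⟨hcad, hpos, hsum⟩ := hA
  -- B of a constant function is 0
  have hBconst : ∀ (f : CI) (a : ℝ), (∀ x, f x = a) → B f = 0 := by
    intro f a hf
    ext x
    rw [hB f x]
    simp [hf]
  have hB1 : B (1 : CI) = 0 := hBconst 1 1 (fun x => rfl)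
  -- Jini ≥ 0
  have hJini0 : (0 : EReal) ≤ Jini φ (π 0) := by
    have h := le_iSup (fun f : CI =>
      (((π 0) f - ∫ x : I01, φ x * (Real.exp (f x) - 1) : ℝ) : EReal)) (0 : CI)
    refine le_trans ?_ h; simp
  -- Jdyn ≥ 0
  have hJdyn0 : (0 : EReal) ≤ Jdyn T₀ B π := by
    have hmem : ((fun _ => (0:CI)), (fun _ => (0:CI))) ∈ C10 T₀ :=
      ⟨continuousOn_const, continuousOn_const, fun t _ => hasDerivWithinAt_const _ _ _⟩
    have h := le_iSup₂ (f := fun (G : (ℝ → CI) × (ℝ → CI)) (_ : G ∈ C10 T₀) =>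
      ((π T₀ (G.1 T₀) - π 0 (G.1 0)
        - ∫ s in (0:ℝ)..T₀, π s (G.2 s + B (G.1 s)) : ℝ) : EReal))
      ((fun _ => (0:CI)), (fun _ => (0:CI))) hmem
    refine le_trans ?_ h
    simp [hBconst 0 0 (fun x => rfl)]
  have hJiniC : Jini φ (π 0) ≤ (C : EReal) := by
    calc Jini φ (π 0) = Jini φ (π 0) + 0 := (add_zero _).symm
      _ ≤ Jini φ (π 0) + Jdyn T₀ B π := add_le_add_right hJdyn0 _
      _ ≤ (C : EReal) := hsum
  have hJdynC : Jdyn T₀ B π ≤ (C : EReal) := by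
    calc Jdyn T₀ B π = 0 + Jdyn T₀ B π := (zero_add _).symm
      _ ≤ Jini φ (π 0) + Jdyn T₀ B π := add_le_add_left hJini0 _
      _ ≤ (C : EReal) := hsum
  -- per-test-function bounds
  have keyI : ∀ f : CI, π 0 f - (∫ x : I01, φ x * (Real.exp (f x) - 1)) ≤ C := by
    intro f
    have h := le_iSup (fun f : CI =>
      (((π 0) f - ∫ x : I01, φ x * (Real.exp (f x) - 1) : ℝ) : EReal)) f
    exact_mod_cast h.trans hJiniC
  have keyD : ∀ G ∈ C10 T₀,
      π T₀ (G.1 T₀) - π 0 (G.1 0)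
        - (∫ s in (0:ℝ)..T₀, π s (G.2 s + B (G.1 s))) ≤ C := by
    intro G hG
    have h := le_iSup₂ (f := fun (G : (ℝ → CI) × (ℝ → CI)) (_ : G ∈ C10 T₀) =>
      ((π T₀ (G.1 T₀) - π 0 (G.1 0)
        - ∫ s in (0:ℝ)..T₀, π s (G.2 s + B (G.1 s)) : ℝ) : EReal)) G hG
    exact_mod_cast h.trans hJdynC
  -- third claim : bound on π 0 1
  have h0bound : π 0 (1 : CI) ≤ C + (Real.exp 1 - 1) * ∫ x : I01, φ x := by
    have h := keyI (1 : CI)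
    have h2 : (∫ x : I01, φ x * (Real.exp ((1:CI) x) - 1))
        = (Real.exp 1 - 1) * ∫ x : I01, φ x := by
      simp only [ContinuousMap.one_apply]
      rw [integral_mul_const]
      ring
    rw [h2] at h
    linarith
  -- second claim
  have hmono : ∀ t ∈ Set.Icc (0:ℝ) T₀, π t (1 : CI) ≤ π 0 (1 : CI) + C := by
    rintro t ⟨ht0, htT⟩
    rcases eq_or_lt_of_le htT with rfl | htlt
    · -- t = T₀ : use the constant test function 1
      have hmem : ((fun _ => (1:CI)), (fun _ => (0:CI))) ∈ C10 t :=
        ⟨continuousOn_const, continuousOn_const, fun s _ => hasDerivWithinAt_const _ _ _⟩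
      have h := keyD _ hmem
      simp only [hB1] at h
      have h2 : (∫ s in (0:ℝ)..t, π s ((0:CI) + 0)) = 0 := by simp
      rw [h2] at h
      linarith
    · -- t < T₀
      by_contra hcon
      push_neg at hcon
      set δ : ℝ := (π t 1 - (π 0 1 + C)) / 2 with hδdef
      have hδ : 0 < δ := by simp only [hδdef]; linarith
      suffices hfin : π t (1:CI) ≤ π 0 (1:CI) + C + δ by
        simp only [hδdef] at hfin; linarith
      -- right continuity at t
      have hrc := (hcad 1).1 t ⟨ht0, htT⟩
      have hev : ∀ᶠ s in nhdsWithin t (Set.Ici t), |π s (1:CI) - π t (1:CI)| < δ := by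
        have h := Metric.tendsto_nhds.mp hrc δ hδ
        simpa [Real.dist_eq] using h
      obtain ⟨ε₀, hε₀, hball⟩ := Metric.mem_nhdsWithin_iff.mp hev
      set ε : ℝ := min (ε₀ / 2) (T₀ - t) with hεdef
      have hεpos : 0 < ε := lt_min (by linarith) (by linarith)
      have hεT : t + ε ≤ T₀ := by
        have := min_le_right (ε₀ / 2) (T₀ - t); simp only [hεdef]; linarith [this]
      have hclose : ∀ s, t ≤ s → s ≤ t + ε → |π s (1:CI) - π t (1:CI)| < δ := by
        intro s hs1 hs2
        apply hball
        refine ⟨?_, Set.mem_Ici.mpr hs1⟩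
        rw [Metric.mem_ball, Real.dist_eq, abs_of_nonneg (by linarith)]
        calc s - t ≤ ε := by linarith
          _ ≤ ε₀ / 2 := min_le_left _ _
          _ < ε₀ := by linarith
      -- the bump function
      set r : ℝ := ε / 2 with hrdef
      have hrpos : 0 < r := by simp only [hrdef]; linarith
      set c : ℝ := t + ε / 2 with hcdef
      set bump : ℝ → ℝ := fun s => max 0 (r - |s - c|) with hbumpdef
      have hbumpcont : Continuous bump := by
        apply continuous_const.max
        exact continuous_const.sub (continuous_id.sub continuous_const).abs
      have hbump0 : ∀ s, 0 ≤ bump s := fun s => le_max_left _ _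
      have hbumple : ∀ s, bump s ≤ r := fun s =>
        max_le hrpos.le (by linarith [abs_nonneg (s - c)])
      have hsupp : ∀ s, bump s ≠ 0 → t < s ∧ s < t + ε := by
        intro s hs
        have h1 : 0 < r - |s - c| := by
          by_contra h
          push_neg at h
          exact hs (max_eq_left h)
        have h2 : |s - c| < r := by linarith
        rw [abs_lt] at h2
        constructor
        · simp only [hcdef, hrdef] at h2 ⊢; linarith [h2.1]
        · simp only [hcdef, hrdef] at h2 ⊢; linarith [h2.2]
      set Z : ℝ := ∫ s in (0:ℝ)..T₀, bump s with hZdef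
      have hZpos : 0 < Z := by
        have h1 : ∫ s in (c - r/2)..(c + r/2), bump s ≤ Z := by
          apply intervalIntegral.integral_mono_interval
            (by simp only [hcdef, hrdef]; linarith)
            (by linarith) (by simp only [hcdef, hrdef]; linarith)
            (Filter.Eventually.of_forall hbump0)
            (hbumpcont.intervalIntegrable _ _)
        have h2 : ∫ s in (c - r/2)..(c + r/2), (r/2 : ℝ) ≤
            ∫ s in (c - r/2)..(c + r/2), bump s := by
          apply intervalIntegral.integral_mono_on (by linarith)
            (intervalIntegrable_const) (hbumpcont.intervalIntegrable _ _)
          intro s hs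
          have h3 : |s - c| ≤ r/2 := by
            rw [abs_le]; constructor <;> [linarith [hs.1]; linarith [hs.2]]
          calc (r/2 : ℝ) ≤ r - |s - c| := by linarith
            _ ≤ bump s := le_max_right _ _
        have h4 : ∫ s in (c - r/2)..(c + r/2), (r/2 : ℝ) = r * (r/2) := by
          simp [intervalIntegral.integral_const, smul_eq_mul]
          ring
        nlinarith [h1, h2, h4]
      set w : ℝ → ℝ := fun s => bump s / Z with hwdef
      have hwcont : Continuous w := hbumpcont.div_const Z
      set g : ℝ → ℝ := fun s => (∫ u in s..T₀, bump u) / Z with hgdef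
      have hgd : ∀ s, HasDerivAt g (-(w s)) s := by
        intro s
        have h1 : HasDerivAt (fun u => ∫ x in T₀..u, bump x) (bump s) s :=
          intervalIntegral.integral_hasDerivAt_right
            (hbumpcont.intervalIntegrable _ _)
            (hbumpcont.stronglyMeasurableAtFilter _ _)
            hbumpcont.continuousAt
        have h2 := (h1.neg).div_const Z
        have h3 : g = fun u => (-(∫ x in T₀..u, bump x)) / Z := by
          funext u
          simp only [hgdef]
          rw [intervalIntegral.integral_symm]
        rw [h3]
        refine h2.congr_deriv ?_
        simp [hwdef, neg_div]
      have hgcont : Continuous g := by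
        rw [continuous_iff_continuousAt]; exact fun s => (hgd s).continuousAt
      -- the test pair
      set G : (ℝ → CI) × (ℝ → CI) :=
        ((fun s => g s • (1:CI)), (fun s => (-(w s)) • (1:CI))) with hGdef
      have hGmem : G ∈ C10 T₀ := by
        refine ⟨?_, ?_, ?_⟩
        · exact (hgcont.smul continuous_const).continuousOn
        · exact ((hwcont.neg).smul continuous_const).continuousOn
        · exact fun s _ => ((hgd s).smul_const (1:CI)).hasDerivWithinAt
      -- the integrand simplification
      have hint : ∀ s, π s (G.2 s + B (G.1 s)) = -(w s * π s (1:CI)) := by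
        intro s
        have hb : B (G.1 s) = 0 := hBconst _ (g s) (fun x => by simp [hGdef])
        simp only [hGdef, hb, add_zero]
        rw [show B (g s • (1:CI)) = 0 from hb, add_zero, ContinuousLinearMap.map_smul]
        simp [smul_eq_mul]
      have hgT : g T₀ = 0 := by simp [hgdef]
      have hg0 : g 0 = 1 := by
        simp only [hgdef, ← hZdef]
        exact div_self hZpos.ne'
      have hkey := keyD G hGmem
      rw [show (∫ s in (0:ℝ)..T₀, π s (G.2 s + B (G.1 s)))
            = ∫ s in (0:ℝ)..T₀, -(w s * π s (1:CI)) from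
          intervalIntegral.integral_congr (fun s _ => hint s),
        intervalIntegral.integral_neg] at hkey
      simp only [hGdef, hgT, hg0, zero_smul, map_zero, one_smul] at hkey
      -- hkey : 0 - π 0 1 - -(∫ w * h) ≤ C
      -- measurability of s ↦ π s 1 on (0, T₀]
      have hmeas : AEMeasurable (fun s => π s (1:CI))
          (volume.restrict (Set.Ioc 0 T₀)) := by
        apply aemeasurable_of_tendsto_metrizable_ae'
          (f := fun (n : ℕ) (x : ℝ) => π ((⌈x * (n:ℝ)⌉ : ℤ) / (n:ℝ)) 1)
        · intro n
          exact ((measurable_from_top (f := fun k : ℤ => π ((k:ℝ) / (n:ℝ)) 1)).comp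
            (Int.measurable_ceil.comp (measurable_id.mul_const _))).aemeasurable
        · filter_upwards [ae_restrict_mem measurableSet_Ioc] with x hx
          have hrcx := (hcad 1).1 x ⟨hx.1.le, hx.2⟩
          apply hrcx.comp
          rw [tendsto_nhdsWithin_iff]
          constructor
          · have hub : Filter.Tendsto (fun n : ℕ => x + 1/(n:ℝ)) Filter.atTop (nhds x) := by
              simpa using (tendsto_const_nhds (x := x)).add tendsto_one_div_atTop_nhds_zero_nat
            apply tendsto_of_tendsto_of_tendsto_of_le_of_le' (tendsto_const_nhds (x := x)) hub
            · filter_upwards [Filter.eventually_ge_atTop 1] with n hn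
              have hnpos : (0:ℝ) < n := by exact_mod_cast hn
              rw [le_div_iff₀ hnpos]
              exact Int.le_ceil _
            · filter_upwards [Filter.eventually_ge_atTop 1] with n hn
              have hnpos : (0:ℝ) < n := by exact_mod_cast hn
              rw [div_le_iff₀ hnpos]
              have h1 := (Int.ceil_lt_add_one (x * n)).le
              have h2 : (x + 1/(n:ℝ)) * n = x * n + 1 := by field_simp
              rw [h2]; exact h1
          · filter_upwards [Filter.eventually_ge_atTop 1] with n hn
            have hnpos : (0:ℝ) < n := by exact_mod_cast hn
            rw [Set.mem_Ici, le_div_iff₀ hnpos]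
            exact Int.le_ceil _
      have hπt1 : 0 ≤ π t (1:CI) := hpos t ⟨ht0, htT⟩ 1 (fun x => by norm_num)
      -- integrability of w * h on [0, T₀]
      have hwh : IntervalIntegrable (fun s => w s * π s (1:CI)) volume 0 T₀ := by
        rw [intervalIntegrable_iff_integrableOn_Ioc_of_le hT₀.le]
        haveI : IsFiniteMeasure (volume.restrict (Set.Ioc (0:ℝ) T₀)) :=
          ⟨by rw [Measure.restrict_apply_univ]; exact measure_Ioc_lt_top⟩
        apply Integrable.mono' (integrable_const (r / Z * (π t (1:CI) + δ)))
        · exact ((hwcont.aemeasurable.restrict).mul hmeas).aestronglyMeasurable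
        · filter_upwards [ae_restrict_mem measurableSet_Ioc] with s hs
          rw [Real.norm_eq_abs]
          by_cases hbs : bump s = 0
          · have : w s = 0 := by simp [hwdef, hbs]
            rw [this, zero_mul, abs_zero]
            positivity
          · obtain ⟨hs1, hs2⟩ := hsupp s hbs
            have hsc := hclose s hs1.le (by linarith)
            have hπs : 0 ≤ π s (1:CI) :=
              hpos s ⟨by linarith, by linarith⟩ 1 (fun x => by norm_num)
            rw [abs_mul, abs_of_nonneg (div_nonneg (hbump0 s) hZpos.le),
              abs_of_nonneg hπs]
            apply mul_le_mul
            · exact (div_le_div_iff_of_pos_right hZpos).mpr (hbumple s)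
            · obtain ⟨ha1, ha2⟩ := abs_lt.mp hsc
              linarith
            · exact hπs
            · positivity
      -- lower bound for the integral
      have hlb : π t (1:CI) - δ ≤ ∫ s in (0:ℝ)..T₀, w s * π s (1:CI) := by
        have h1 : ∫ s in (0:ℝ)..T₀, w s * (π t (1:CI) - δ)
            ≤ ∫ s in (0:ℝ)..T₀, w s * π s (1:CI) := by
          apply intervalIntegral.integral_mono_on hT₀.le
            ((hwcont.mul continuous_const).intervalIntegrable _ _) hwh
          intro s hs
          simp only [Pi.mul_apply]
          by_cases hbs : bump s = 0
          · have : w s = 0 := by simp [hwdef, hbs]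
            rw [this, zero_mul, zero_mul]
          · obtain ⟨hs1, hs2⟩ := hsupp s hbs
            have hsc := hclose s hs1.le (by linarith)
            have hwnn : 0 ≤ w s := div_nonneg (hbump0 s) hZpos.le
            apply mul_le_mul_of_nonneg_left _ hwnn
            obtain ⟨ha1, ha2⟩ := abs_lt.mp hsc
            linarith
        have h2 : ∫ s in (0:ℝ)..T₀, w s * (π t (1:CI) - δ)
            = π t (1:CI) - δ := by
          rw [intervalIntegral.integral_mul_const]
          have h3 : ∫ s in (0:ℝ)..T₀, w s = 1 := by
            simp only [hwdef]
            rw [intervalIntegral.integral_div, ← hZdef, div_self hZpos.ne']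
          rw [h3, one_mul]
        linarith
      linarith [hkey, hlb]
  -- first claim
  refine ⟨?_, hmono, h0bound⟩
  intro f hf t ht
  set M : ℝ := ⨆ x : I01, f x with hMdef
  have hbdd : BddAbove (Set.range fun x : I01 => f x) :=
    (isCompact_range f.continuous).bddAbove
  have hMle : ∀ x : I01, f x ≤ M := fun x => le_ciSup hbdd x
  have hM0 : 0 ≤ M := le_trans (hf 0) (hMle 0)
  have h1 : π t f ≤ M * π t (1:CI) := by
    have hnn : 0 ≤ π t (M • (1:CI) - f) := by
      apply hpos t ht
      intro x
      simp only [ContinuousMap.sub_apply, ContinuousMap.smul_apply,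
        ContinuousMap.one_apply, smul_eq_mul, mul_one]
      linarith [hMle x]
    rw [map_sub, ContinuousLinearMap.map_smul, smul_eq_mul] at hnn
    linarith
  have h2 : π t (1:CI) ≤ 2 * C + (Real.exp 1 - 1) * ∫ x : I01, φ x := by
    have := hmono t ht
    linarith
  calc π t f ≤ M * π t (1:CI) := h1
    _ ≤ M * (2 * C + (Real.exp 1 - 1) * ∫ x : I01, φ x) :=
      mul_le_mul_of_nonneg_left h2 hM0
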